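/- Let σ > 0, λ > 0, x0 ∈ ℝ^P, and Y = x0 + W with W_i independent N(0,σ²). Then the degrees of freedom of hard thresholding admits the closed form DOF_HT(x0,λ) = (P − (1/2)·Σ_{i=1}^P [erf(((x0)_i + λ)/(√2·σ)) − erf(((x0)_i − λ)/(√2·σ))]) + (λ/(√(2π)·σ))·Σ_{i=1}^P [exp(−((x0)_i + λ)²/(2σ²)) + exp(−((x0)_i − λ)²/(2σ²))]. -/

import Mathlib

open MeasureTheory ProbabilityTheory Filter Real
open scoped ENNReal NNReal

/-- Scalar hard thresholding at threshold `lam`. -/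
noncomputable def HT (lam y : ℝ) : ℝ := if |y| < lam then 0 else y

/-- Covariance of two real random variables. -/
noncomputable def cov {Ω : Type*} [MeasurableSpace Ω] (μ : Measure Ω) (X Y : Ω → ℝ) : ℝ :=
  ∫ ω, (X ω - ∫ x, X x ∂μ) * (Y ω - ∫ x, Y x ∂μ) ∂μ

/-- The Gauss error function `erf t = (2/√π) ∫₀ᵗ exp(−s²) ds`. -/
noncomputable def erf (t : ℝ) : ℝ :=
  (2 / Real.sqrt π) * ∫ s in (0 : ℝ)..t, Real.exp (-s ^ 2)

lemma measurable_HT (lam : ℝ) : Measurable (HT lam) := by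
  unfold HT
  exact Measurable.ite (measurableSet_lt (continuous_abs.measurable) measurable_const)
    measurable_const measurable_id

lemma erf_hasDerivAt (t : ℝ) :
    HasDerivAt erf (2 / Real.sqrt π * Real.exp (-t ^ 2)) t := by
  have hc : Continuous fun s : ℝ => Real.exp (-s ^ 2) :=
    Real.continuous_exp.comp (continuous_pow 2).neg
  have h : HasDerivAt (fun u => ∫ s in (0:ℝ)..u, Real.exp (-s ^ 2)) (Real.exp (-t ^ 2)) t := by
    exact intervalIntegral.integral_hasDerivAt_right (hc.intervalIntegrable _ _)
      hc.stronglyMeasurable.stronglyMeasurableAtFilter hc.continuousAt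
  exact (h.const_mul (2 / Real.sqrt π)).congr_deriv (by ring)

lemma erf_neg (t : ℝ) : erf (-t) = - erf t := by
  unfold erf
  have h : ∫ s in (0:ℝ)..t, Real.exp (-(-s) ^ 2) = ∫ s in (-t:ℝ)..(-(0:ℝ)), Real.exp (-s ^ 2) :=
    intervalIntegral.integral_comp_neg fun s => Real.exp (-s ^ 2)
  simp only [neg_sq, neg_zero] at h
  rw [show ∫ s in (0:ℝ)..(-t), Real.exp (-s ^ 2)
      = -∫ s in (-t:ℝ)..(0:ℝ), Real.exp (-s ^ 2) from (intervalIntegral.integral_symm _ _), ← h]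
  ring

section phi
variable {σ : ℝ} (hσ : 0 < σ)

/-- The centered Gaussian density. -/
noncomputable def gphi (σ x : ℝ) : ℝ :=
  (Real.sqrt (2 * π) * σ)⁻¹ * Real.exp (-x ^ 2 / (2 * σ ^ 2))

lemma gphi_cont (σ : ℝ) : Continuous (gphi σ) := by
  unfold gphi
  exact continuous_const.mul (Real.continuous_exp.comp ((continuous_pow 2).neg.div_const _))

include hσ

omit hσ in
lemma gphi_eq (x : ℝ) :
    gphi σ x = (Real.sqrt (2 * π) * σ)⁻¹ * Real.exp (-(2 * σ ^ 2)⁻¹ * x ^ 2) := by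
  rw [gphi, show -x ^ 2 / (2 * σ ^ 2) = -(2 * σ ^ 2)⁻¹ * x ^ 2 by ring]

lemma integrable_gphi : Integrable (gphi σ) := by
  have hb : (0:ℝ) < (2 * σ ^ 2)⁻¹ := by positivity
  have := (integrable_exp_neg_mul_sq hb).const_mul (Real.sqrt (2 * π) * σ)⁻¹
  exact this.congr (ae_of_all _ fun x => (gphi_eq x).symm)

lemma integrable_mul_gphi : Integrable (fun x => x * gphi σ x) := by
  have hb : (0:ℝ) < (2 * σ ^ 2)⁻¹ := by positivity
  have := (integrable_mul_exp_neg_mul_sq hb).const_mul (Real.sqrt (2 * π) * σ)⁻¹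
  exact this.congr (ae_of_all _ fun x => by simp only [gphi_eq]; ring)

lemma integrable_sq_mul_gphi : Integrable (fun x => x ^ 2 * gphi σ x) := by
  have hb : (0:ℝ) < (2 * σ ^ 2)⁻¹ := by positivity
  have h2 := (integrable_rpow_mul_exp_neg_mul_sq hb (by norm_num : (-1:ℝ) < 2)).const_mul
    (Real.sqrt (2 * π) * σ)⁻¹
  refine h2.congr (ae_of_all _ fun x => ?_)
  simp only [Real.rpow_two, gphi_eq]; ring

lemma gphi_hasDerivAt (x : ℝ) :
    HasDerivAt (gphi σ) (-(x / σ ^ 2) * gphi σ x) x := by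
  have hg : HasDerivAt (fun x : ℝ => -x ^ 2 / (2 * σ ^ 2)) (-(x / σ ^ 2)) x := by
    have := ((hasDerivAt_pow 2 x).neg).div_const (2 * σ ^ 2)
    refine this.congr_deriv ?_
    field_simp
    ring
  have := (hg.exp).const_mul (Real.sqrt (2 * π) * σ)⁻¹
  refine this.congr_deriv ?_
  rw [gphi]; ring

lemma gphi_eq_pdf (x : ℝ) :
    gaussianPDFReal 0 ⟨σ ^ 2, sq_nonneg σ⟩ x = gphi σ x := by
  unfold gaussianPDFReal gphi
  have h2 : Real.sqrt (2 * π * σ ^ 2) = Real.sqrt (2 * π) * σ := by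
    rw [Real.sqrt_mul (by positivity), Real.sqrt_sq hσ.le]
  simp only [NNReal.coe_mk, h2, sub_zero]
  change (√(2 * π * σ ^ 2))⁻¹ * rexp (-x ^ 2 / (2 * σ ^ 2)) = _
  rw [h2]

lemma integral_gphi_eq_one : ∫ x, gphi σ x = 1 := by
  rw [show (fun x => gphi σ x) = gaussianPDFReal 0 ⟨σ ^ 2, sq_nonneg σ⟩ from
    funext fun x => (gphi_eq_pdf hσ x).symm]
  exact integral_gaussianPDFReal_eq_one 0 (fun h => (pow_pos hσ 2).ne' (congrArg NNReal.toReal h))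

lemma integral_mul_gphi : ∫ x, x * gphi σ x = 0 := by
  have hderiv : ∀ x, HasDerivAt (fun x => -(σ ^ 2 * gphi σ x)) (x * gphi σ x) x := by
    intro x
    have := ((gphi_hasDerivAt hσ x).const_mul (σ ^ 2)).neg
    refine this.congr_deriv ?_
    field_simp
  exact integral_eq_zero_of_hasDerivAt_of_integrable hderiv (integrable_mul_gphi hσ)
    (((integrable_gphi hσ).const_mul _).neg)

lemma integral_sq_mul_gphi : ∫ x, x ^ 2 * gphi σ x = σ ^ 2 := by
  have hderiv : ∀ x, HasDerivAt (fun x => -(σ ^ 2 * (x * gphi σ x)))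
      (x ^ 2 * gphi σ x - σ ^ 2 * gphi σ x) x := by
    intro x
    have h := ((hasDerivAt_id x).mul (gphi_hasDerivAt hσ x)).const_mul (σ ^ 2) |>.neg
    refine h.congr_deriv ?_
    simp only [id]
    field_simp
    ring
  have hint : Integrable (fun x => x ^ 2 * gphi σ x - σ ^ 2 * gphi σ x) :=
    (integrable_sq_mul_gphi hσ).sub ((integrable_gphi hσ).const_mul _)
  have h0 := integral_eq_zero_of_hasDerivAt_of_integrable hderiv hint
    (((integrable_mul_gphi hσ).const_mul _).neg)
  rw [integral_sub (integrable_sq_mul_gphi hσ) ((integrable_gphi hσ).const_mul _)] at h0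
  have h1 : ∫ x, σ ^ 2 * gphi σ x = σ ^ 2 := by
    rw [integral_const_mul, integral_gphi_eq_one hσ, mul_one]
  linarith [h0, h1]
end phi

section transfer
variable {σ : ℝ} (hσ : 0 < σ)
include hσ

lemma gaussianReal_eq_withDensity :
    gaussianReal 0 ⟨σ ^ 2, sq_nonneg σ⟩
      = volume.withDensity (fun x => ((gphi σ x).toNNReal : ℝ≥0∞)) := by
  rw [gaussianReal_of_var_ne_zero 0 (v := ⟨σ ^ 2, sq_nonneg σ⟩)
    (fun h => (pow_pos hσ 2).ne' (congrArg NNReal.toReal h))]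
  congr 1
  funext x
  unfold gaussianPDF
  rw [gphi_eq_pdf hσ x, ENNReal.ofReal]

omit hσ in
lemma measurable_gphi_toNNReal : Measurable fun x => (gphi σ x).toNNReal :=
  (gphi_cont σ).measurable.real_toNNReal

lemma gphi_pos (x : ℝ) : 0 < gphi σ x := by
  unfold gphi; positivity

lemma integral_gaussianReal_eq (f : ℝ → ℝ) :
    ∫ x, f x ∂(gaussianReal 0 ⟨σ ^ 2, sq_nonneg σ⟩) = ∫ x, f x * gphi σ x := by
  rw [gaussianReal_eq_withDensity hσ,
    integral_withDensity_eq_integral_smul measurable_gphi_toNNReal f]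
  congr 1
  funext x
  rw [NNReal.smul_def, Real.coe_toNNReal _ (gphi_pos hσ x).le, smul_eq_mul, mul_comm]

lemma integrable_gaussianReal_iff (f : ℝ → ℝ) :
    Integrable f (gaussianReal 0 ⟨σ ^ 2, sq_nonneg σ⟩)
      ↔ Integrable (fun x => f x * gphi σ x) := by
  rw [gaussianReal_eq_withDensity hσ,
    integrable_withDensity_iff_integrable_smul measurable_gphi_toNNReal]
  constructor <;> intro h <;> refine h.congr (ae_of_all _ fun x => ?_) <;> simp only [] <;>
    rw [NNReal.smul_def, Real.coe_toNNReal _ (gphi_pos hσ x).le, smul_eq_mul, mul_comm]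

end transfer

section interval
variable {σ lam c : ℝ} (hσ : 0 < σ) (hlam : 0 < lam)

omit hσ in
lemma gphi_even (x : ℝ) : gphi σ (-x) = gphi σ x := by
  unfold gphi; rw [neg_sq]

include hσ

lemma F_hasDerivAt (x : ℝ) :
    HasDerivAt (fun x => σ ^ 2 * ((1/2) * erf (x / (Real.sqrt 2 * σ)))
        - σ ^ 2 * ((c + x) * gphi σ x))
      (x * (c + x) * gphi σ x) x := by
  have hinner : HasDerivAt (fun x : ℝ => x / (Real.sqrt 2 * σ)) (1 / (Real.sqrt 2 * σ)) x :=
    (hasDerivAt_id x).div_const _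
  have h1 : HasDerivAt (fun x => erf (x / (Real.sqrt 2 * σ)))
      (2 / Real.sqrt π * Real.exp (-(x / (Real.sqrt 2 * σ)) ^ 2) * (1 / (Real.sqrt 2 * σ))) x :=
    (erf_hasDerivAt _).comp x hinner
  have h2 : HasDerivAt (fun x => (c + x) * gphi σ x)
      (1 * gphi σ x + (c + x) * (-(x / σ ^ 2) * gphi σ x)) x := by
    have hca : HasDerivAt (fun x : ℝ => c + x) 1 x := by
      simpa using (hasDerivAt_id x).const_add c
    exact hca.mul (gphi_hasDerivAt hσ x)
  have h := ((h1.const_mul ((1:ℝ)/2)).const_mul (σ ^ 2)).sub ((h2.const_mul (σ ^ 2)))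
  refine h.congr_deriv ?_
  have hsq : (x / (Real.sqrt 2 * σ)) ^ 2 = x ^ 2 / (2 * σ ^ 2) := by
    rw [div_pow, mul_pow, Real.sq_sqrt (by norm_num : (0:ℝ) ≤ 2)]
  have hsqrt : Real.sqrt (2 * π) = Real.sqrt 2 * Real.sqrt π :=
    Real.sqrt_mul (by norm_num) π
  rw [hsq, gphi, hsqrt]
  have h2' : Real.sqrt 2 ≠ 0 := by positivity
  have hπ : Real.sqrt π ≠ 0 := by positivity
  field_simp
  ring

include hlam in
lemma integral_J :
    ∫ x, (x * (if |c + x| < lam then c + x else 0)) * gphi σ x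
      = σ ^ 2 * ((1/2) * (erf ((lam - c) / (Real.sqrt 2 * σ))
          - erf ((-lam - c) / (Real.sqrt 2 * σ))))
        - σ ^ 2 * (lam * (gphi σ (lam - c) + gphi σ (lam + c))) := by
  have hind : (fun x => (x * (if |c + x| < lam then c + x else 0)) * gphi σ x)
      = Set.indicator (Set.Ioo (-lam - c) (lam - c)) (fun x => x * (c + x) * gphi σ x) := by
    funext x
    rw [Set.indicator_apply]
    by_cases h : |c + x| < lam
    · have hm : x ∈ Set.Ioo (-lam - c) (lam - c) := by
        have h2 := abs_lt.mp h
        exact Set.mem_Ioo.mpr ⟨by linarith [h2.1], by linarith [h2.2]⟩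
      rw [if_pos h, if_pos hm]
    · have hm : x ∉ Set.Ioo (-lam - c) (lam - c) := by
        intro hm
        exact h (abs_lt.mpr ⟨by linarith [hm.1], by linarith [hm.2]⟩)
      rw [if_neg h, if_neg hm]; ring
  have hab : (-lam - c : ℝ) ≤ lam - c := by linarith
  have hcont : Continuous (fun x => x * (c + x) * gphi σ x) :=
    (continuous_id.mul (continuous_const.add continuous_id)).mul (gphi_cont σ)
  rw [hind, integral_indicator measurableSet_Ioo, ← integral_Ioc_eq_integral_Ioo,
    ← intervalIntegral.integral_of_le hab,
    intervalIntegral.integral_eq_sub_of_hasDerivAt (fun x _ => F_hasDerivAt hσ x)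
      (hcont.intervalIntegrable _ _)]
  have e1 : c + (lam - c) = lam := by ring
  have e2 : c + (-lam - c) = -lam := by ring
  rw [e1, e2, show (-lam - c : ℝ) = -(lam + c) by ring, gphi_even]
  ring
end interval

section key
variable {Ω : Type*} [MeasurableSpace Ω] (μpr : Measure Ω) [IsProbabilityMeasure μpr]
  {σ lam c : ℝ} (hσ : 0 < σ) (hlam : 0 < lam) (Wi : Ω → ℝ)
  (hm : Measurable Wi)
  (hd : Measure.map Wi μpr = gaussianReal 0 ⟨σ ^ 2, sq_nonneg σ⟩)

include hσ

omit hσ in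
lemma abs_HT_le (y : ℝ) : |HT lam y| ≤ |y| := by
  unfold HT; split
  · simp [abs_nonneg]
  · exact le_refl _

lemma integrable_abs_mul_gphi : Integrable (fun x => |x| * gphi σ x) := by
  refine (integrable_mul_gphi hσ).abs.congr (ae_of_all _ fun x => ?_)
  simp only []
  rw [abs_mul, abs_of_pos (gphi_pos hσ x)]

lemma nu_ai : Integrable (fun x => x) (gaussianReal 0 ⟨σ ^ 2, sq_nonneg σ⟩) :=
  (integrable_gaussianReal_iff hσ _).mpr (integrable_mul_gphi hσ)

lemma nu_asq : Integrable (fun x => x ^ 2) (gaussianReal 0 ⟨σ ^ 2, sq_nonneg σ⟩) :=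
  (integrable_gaussianReal_iff hσ _).mpr (integrable_sq_mul_gphi hσ)

lemma nu_aHT : Integrable (fun x => x * HT lam (c + x)) (gaussianReal 0 ⟨σ ^ 2, sq_nonneg σ⟩) := by
  refine (integrable_gaussianReal_iff hσ _).mpr ?_
  refine Integrable.mono' (g := fun x => |c| * (|x| * gphi σ x) + x ^ 2 * gphi σ x)
    (((integrable_abs_mul_gphi hσ).const_mul _).add (integrable_sq_mul_gphi hσ))
    (((measurable_id.mul ((measurable_HT lam).comp (measurable_id.const_add c))).mul
      (gphi_cont σ).measurable).aestronglyMeasurable) (ae_of_all _ fun x => ?_)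
  have h1 : |HT lam (c + x)| ≤ |c| + |x| := (abs_HT_le _).trans (abs_add_le c x)
  have h2 : (0:ℝ) < gphi σ x := gphi_pos hσ x
  rw [Real.norm_eq_abs, abs_mul, abs_mul, abs_of_pos h2]
  calc |x| * |HT lam (c + x)| * gphi σ x ≤ |x| * (|c| + |x|) * gphi σ x := by
        apply mul_le_mul_of_nonneg_right (mul_le_mul_of_nonneg_left h1 (abs_nonneg x)) h2.le
    _ = |c| * (|x| * gphi σ x) + |x| ^ 2 * gphi σ x := by ring
    _ = |c| * (|x| * gphi σ x) + x ^ 2 * gphi σ x := by rw [sq_abs]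

include hlam in
lemma nu_ah : Integrable (fun x => x * (if |c + x| < lam then c + x else 0))
    (gaussianReal 0 ⟨σ ^ 2, sq_nonneg σ⟩) := by
  refine (integrable_gaussianReal_iff hσ _).mpr ?_
  refine Integrable.mono' (g := fun x => lam * (|x| * gphi σ x))
    ((integrable_abs_mul_gphi hσ).const_mul _)
    (((measurable_id.mul (Measurable.ite
      (measurableSet_lt (continuous_abs.measurable.comp (measurable_id.const_add c))
        measurable_const) (measurable_id.const_add c) measurable_const)).mul
      (gphi_cont σ).measurable).aestronglyMeasurable) (ae_of_all _ fun x => ?_)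
  have h2 : (0:ℝ) < gphi σ x := gphi_pos hσ x
  have h1 : |if |c + x| < lam then c + x else 0| ≤ lam := by
    split
    · next h => exact le_of_lt (by simpa using h)
    · simpa using le_of_lt hlam
  rw [Real.norm_eq_abs, abs_mul, abs_mul, abs_of_pos h2]
  calc |x| * |if |c + x| < lam then c + x else 0| * gphi σ x
      ≤ |x| * lam * gphi σ x := by
        apply mul_le_mul_of_nonneg_right (mul_le_mul_of_nonneg_left h1 (abs_nonneg x)) h2.le
    _ = lam * (|x| * gphi σ x) := by ring

lemma nu_aid2 : Integrable (fun x => x * (c + x)) (gaussianReal 0 ⟨σ ^ 2, sq_nonneg σ⟩) := by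
  refine (((nu_ai hσ).const_mul c).add (nu_asq hσ)).congr (ae_of_all _ fun x => ?_)
  simp only [Pi.add_apply]; ring

lemma nu_EX : ∫ x, (c + x) ∂(gaussianReal 0 ⟨σ ^ 2, sq_nonneg σ⟩) = c := by
  haveI := instIsProbabilityMeasureGaussianReal 0 ⟨σ ^ 2, sq_nonneg σ⟩
  rw [integral_add (integrable_const c) (nu_ai hσ), integral_const]
  simp [integral_gaussianReal_eq hσ (fun x => x), integral_mul_gphi hσ]

end key

section key2
variable {Ω : Type*} [MeasurableSpace Ω] {μpr : Measure Ω} [IsProbabilityMeasure μpr]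
  {σ lam c : ℝ} (hσ : 0 < σ) (hlam : 0 < lam) {Wi : Ω → ℝ}
  (hm : Measurable Wi)
  (hd : Measure.map Wi μpr = gaussianReal 0 ⟨σ ^ 2, sq_nonneg σ⟩)

include hσ hlam hm hd

lemma cov_eq :
    cov μpr (fun ω => c + Wi ω) (fun ω => HT lam (c + Wi ω))
      = σ ^ 2 - (σ ^ 2 * ((1/2) * (erf ((lam - c) / (Real.sqrt 2 * σ))
            - erf ((-lam - c) / (Real.sqrt 2 * σ))))
          - σ ^ 2 * (lam * (gphi σ (lam - c) + gphi σ (lam + c)))) := by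
  set ν := gaussianReal 0 ⟨σ ^ 2, sq_nonneg σ⟩ with hν
  set M : ℝ := ∫ y, HT lam (c + y) ∂ν with hM
  have hmap : ∀ (g : ℝ → ℝ), Measurable g → ∫ ω, g (Wi ω) ∂μpr = ∫ y, g y ∂ν := by
    intro g hg
    rw [← hd]
    exact (integral_map hm.aemeasurable hg.aestronglyMeasurable).symm
  have htHT : Measurable (fun y => HT lam (c + y)) :=
    (measurable_HT lam).comp (measurable_id.const_add c)
  have h1 : ∫ ω, (c + Wi ω) ∂μpr = c := by
    rw [hmap (fun y => c + y) (measurable_id.const_add c)]; exact nu_EX hσ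
  have h2 : ∫ ω, HT lam (c + Wi ω) ∂μpr = M := by
    rw [hmap (fun y => HT lam (c + y)) htHT]
  have h3 : cov μpr (fun ω => c + Wi ω) (fun ω => HT lam (c + Wi ω))
      = ∫ y, (c + y - c) * (HT lam (c + y) - M) ∂ν := by
    rw [cov, ← hmap (fun y => (c + y - c) * (HT lam (c + y) - M))
      (((measurable_id.const_add c).sub measurable_const).mul (htHT.sub measurable_const))]
    simp only [h1, h2]
  rw [h3]
  have h4 : ∫ y, (c + y - c) * (HT lam (c + y) - M) ∂ν
      = ∫ y, (y * HT lam (c + y) - M * y) ∂ν :=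
    integral_congr_ae (ae_of_all _ fun y => by ring)
  have hxdν : ∫ y, y ∂ν = 0 := by
    rw [hν, integral_gaussianReal_eq hσ (fun y => y)]; exact integral_mul_gphi hσ
  rw [h4, integral_sub (nu_aHT hσ) ((nu_ai hσ).const_mul M), integral_const_mul, hxdν,
    mul_zero, sub_zero]
  have h5 : ∫ y, y * HT lam (c + y) ∂ν
      = ∫ y, (y * (c + y) - y * (if |c + y| < lam then c + y else 0)) ∂ν := by
    refine integral_congr_ae (ae_of_all _ fun y => ?_)
    simp only [HT]
    by_cases hy : |c + y| < lam
    · rw [if_pos hy, if_pos hy]; ring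
    · rw [if_neg hy, if_neg hy]; ring
  have h6 : ∫ y, y * (c + y) ∂ν = σ ^ 2 := by
    have : ∫ y, y * (c + y) ∂ν = ∫ y, (c * y + y ^ 2) ∂ν :=
      integral_congr_ae (ae_of_all _ fun y => by ring)
    rw [this, integral_add ((nu_ai hσ).const_mul c) (nu_asq hσ), integral_const_mul, hxdν,
      mul_zero, zero_add, integral_gaussianReal_eq hσ (fun y => y ^ 2),
      integral_sq_mul_gphi hσ]
  have h7 : ∫ y, y * (if |c + y| < lam then c + y else 0) ∂ν
      = σ ^ 2 * ((1/2) * (erf ((lam - c) / (Real.sqrt 2 * σ))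
          - erf ((-lam - c) / (Real.sqrt 2 * σ))))
        - σ ^ 2 * (lam * (gphi σ (lam - c) + gphi σ (lam + c))) := by
    rw [integral_gaussianReal_eq hσ (fun y => y * (if |c + y| < lam then c + y else 0))]
    exact integral_J hσ hlam
  rw [h5, integral_sub (nu_aid2 hσ) (nu_ah hσ hlam), h6, h7]
end key2

lemma key {Ω : Type*} [MeasurableSpace Ω] {μpr : Measure Ω} [IsProbabilityMeasure μpr]
    {σ lam c : ℝ} (hσ : 0 < σ) (hlam : 0 < lam) {Wi : Ω → ℝ}
    (hm : Measurable Wi)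
    (hd : Measure.map Wi μpr = gaussianReal 0 ⟨σ ^ 2, sq_nonneg σ⟩) :
    cov μpr (fun ω => c + Wi ω) (fun ω => HT lam (c + Wi ω)) / σ ^ 2
      = (1 - (1/2) * (erf ((c + lam) / (Real.sqrt 2 * σ))
            - erf ((c - lam) / (Real.sqrt 2 * σ))))
        + lam / (Real.sqrt (2 * π) * σ)
            * (Real.exp (-(c + lam) ^ 2 / (2 * σ ^ 2))
              + Real.exp (-(c - lam) ^ 2 / (2 * σ ^ 2))) := by
  rw [cov_eq hσ hlam hm hd,
    show (lam - c) / (Real.sqrt 2 * σ) = -((c - lam) / (Real.sqrt 2 * σ)) by ring,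
    show (-lam - c) / (Real.sqrt 2 * σ) = -((c + lam) / (Real.sqrt 2 * σ)) by ring,
    erf_neg, erf_neg,
    show (lam - c : ℝ) = -(c - lam) by ring, gphi_even, show (lam + c : ℝ) = c + lam by ring]
  unfold gphi
  rw [show (-(c - lam)^2 / (2 * σ ^ 2)) = (-(c - lam) ^ 2 / (2 * σ ^ 2)) by ring]
  have hs : Real.sqrt (2 * π) * σ ≠ 0 := by positivity
  have hσ2 : (σ:ℝ) ^ 2 ≠ 0 := by positivity
  field_simp
  ring


/-- closed form of the degrees of freedom of hard thresholding. -/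
theorem dof_hard_thresholding_closed_form
    {Ω : Type*} [MeasurableSpace Ω] (μpr : Measure Ω) [IsProbabilityMeasure μpr]
    (P : ℕ) (σ lam : ℝ) (hσ : 0 < σ) (hlam : 0 < lam)
    (x0 : Fin P → ℝ) (W : Fin P → Ω → ℝ)
    (hmeas : ∀ i, Measurable (W i))
    (hindep : iIndepFun W μpr)
    (hdist : ∀ i, Measure.map (W i) μpr = gaussianReal 0 ⟨σ ^ 2, sq_nonneg σ⟩) :
    (∑ i, cov μpr (fun ω => x0 i + W i ω) (fun ω => HT lam (x0 i + W i ω)) / σ ^ 2)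
      = ((P : ℝ) - (1 / 2) *
          ∑ i, (erf ((x0 i + lam) / (Real.sqrt 2 * σ)) -
                erf ((x0 i - lam) / (Real.sqrt 2 * σ)))) +
        lam / (Real.sqrt (2 * π) * σ) *
          ∑ i, (Real.exp (-(x0 i + lam) ^ 2 / (2 * σ ^ 2)) +
                Real.exp (-(x0 i - lam) ^ 2 / (2 * σ ^ 2))) := by
  rw [Finset.sum_congr rfl (fun i _ => key hσ hlam (hmeas i) (hdist i)),
    Finset.sum_add_distrib, Finset.sum_sub_distrib, ← Finset.mul_sum, ← Finset.mul_sum,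
    Finset.sum_const, Finset.card_univ, Fintype.card_fin, nsmul_eq_mul, mul_one]
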